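/- Every finite set A of natural numbers contains a sum-free subset S with |S| ≥ |A|/3. -/

import Mathlib

def SumFree (S : Finset ℕ) : Prop := ∀ x ∈ S, ∀ y ∈ S, ∀ z ∈ S, x + y ≠ z

lemma card_filter_mul_mem {p : ℕ} [Fact p.Prime] (a : ZMod p) (ha : a ≠ 0)
    (B : Finset (ZMod p)) :
    ((Finset.univ : Finset (ZMod p)).filter (fun t => t * a ∈ B)).card = B.card := by
  apply Finset.card_nbij' (fun t => t * a) (fun s => s * a⁻¹)
  · intro t ht; simpa using (Finset.mem_filter.mp ht).2
  · intro s hs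
    simp only [Finset.mem_coe, Finset.mem_filter, Finset.mem_univ, true_and]
    rw [mul_assoc, inv_mul_cancel₀ ha, mul_one]; exact hs
  · intro t _; dsimp only; rw [mul_assoc, mul_inv_cancel₀ ha, mul_one]
  · intro s _; dsimp only; rw [mul_assoc, inv_mul_cancel₀ ha, mul_one]

theorem erdos_sum_free (A : Finset ℕ) (hA : ∀ a ∈ A, 0 < a) :
    ∃ S ⊆ A, SumFree S ∧ (A.card : ℚ) / 3 ≤ (S.card : ℚ) := by
  obtain ⟨p, hpgt, hpp, hpmod⟩ :=
    Nat.forall_exists_prime_gt_and_eq_mod (q := 3) (a := 2) (by decide) (A.sup id)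
  haveI : Fact p.Prime := ⟨hpp⟩
  have hp3 : p % 3 = 2 := by
    have := ZMod.val_natCast (n := 3) p
    rw [hpmod] at this; exact this.symm.trans (by decide)
  set k := p / 3 with hk
  have hpk : p = 3 * k + 2 := by
    have := Nat.div_add_mod p 3; omega
  have hAlt : ∀ a ∈ A, a < p := fun a ha' =>
    lt_of_le_of_lt (Finset.le_sup (f := id) ha') hpgt
  have hAne : ∀ a ∈ A, (a : ZMod p) ≠ 0 := by
    intro a ha'
    rw [Ne, ZMod.natCast_eq_zero_iff]
    intro hdvd
    have := Nat.le_of_dvd (hA a ha') hdvd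
    have := hAlt a ha'
    omega
  set B : Finset (ZMod p) := Finset.univ.filter
      (fun s => k < s.val ∧ s.val ≤ 2 * k + 1) with hB
  have hBcard : B.card = k + 1 := by
    have h1 : B.card = (Finset.Ioc k (2 * k + 1)).card := by
      apply Finset.card_nbij' ZMod.val (fun n => (n : ZMod p))
      · intro s hs
        simp only [Finset.mem_coe, hB, Finset.mem_filter] at hs
        simp [Finset.mem_Ioc, hs.1, hs.2]
      · intro n hn
        simp only [Finset.mem_coe, Finset.mem_Ioc] at hn
        have hnp : n < p := by omega
        simp [hB, ZMod.val_natCast, Nat.mod_eq_of_lt hnp, hn.1, hn.2]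
      · intro s _; simp [ZMod.natCast_val, ZMod.cast_id]
      · intro n hn
        simp only [Finset.mem_coe, Finset.mem_Ioc] at hn
        exact ZMod.val_natCast_of_lt (by omega)
    rw [h1, Nat.card_Ioc]; omega
  set f : ZMod p → ℕ :=
    fun t => (A.filter (fun a : ℕ => t * (a : ZMod p) ∈ B)).card with hf
  have hsum : ∑ t ∈ Finset.univ.erase (0 : ZMod p), f t = A.card * (k + 1) := by
    have h2 : ∑ t ∈ Finset.univ.erase (0 : ZMod p), f t
        = ∑ a ∈ A, ((Finset.univ.erase (0 : ZMod p)).filter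
            (fun t => t * (a : ZMod p) ∈ B)).card := by
      simp only [hf, Finset.card_filter]
      rw [Finset.sum_comm]
    rw [h2]
    rw [Finset.sum_congr rfl (fun a ha' => ?_), Finset.sum_const, smul_eq_mul]
    have ha0 : (a : ZMod p) ≠ 0 := hAne a ha'
    have hB0 : (0 : ZMod p) ∉ B := by simp [hB]
    have h3 : (Finset.univ.erase (0 : ZMod p)).filter (fun t => t * (a : ZMod p) ∈ B)
        = Finset.univ.filter (fun t => t * (a : ZMod p) ∈ B) := by
      ext t
      simp only [Finset.mem_filter, Finset.mem_erase, Finset.mem_univ, true_and, and_true]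
      constructor
      · rintro ⟨_, h⟩; exact h
      · intro h
        refine ⟨fun ht => ?_, h⟩
        rw [ht, zero_mul] at h; exact hB0 h
    rw [h3, card_filter_mul_mem _ ha0, hBcard]
  have hcard_erase : (Finset.univ.erase (0 : ZMod p)).card = 3 * k + 1 := by
    rw [Finset.card_erase_of_mem (Finset.mem_univ _), Finset.card_univ, ZMod.card]
    omega
  have hex : ∃ t ∈ Finset.univ.erase (0 : ZMod p), A.card * (k + 1) ≤ f t * (3 * k + 1) := by
    by_contra hcon
    push_neg at hcon
    have hlt : ∑ t ∈ Finset.univ.erase (0 : ZMod p), f t * (3 * k + 1)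
        < ∑ _t ∈ Finset.univ.erase (0 : ZMod p), A.card * (k + 1) := by
      apply Finset.sum_lt_sum_of_nonempty
      · rw [← Finset.card_pos, hcard_erase]; omega
      · exact hcon
    rw [← Finset.sum_mul, hsum, Finset.sum_const, smul_eq_mul, hcard_erase,
      Nat.mul_comm] at hlt
    exact Nat.lt_irrefl _ hlt
  obtain ⟨t, ht0, htcount⟩ := hex
  refine ⟨A.filter (fun a : ℕ => t * (a : ZMod p) ∈ B), Finset.filter_subset _ _, ?_, ?_⟩
  · intro x hx y hy z hz hxyz
    simp only [Finset.mem_filter, hB, Finset.mem_filter, Finset.mem_univ, true_and]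
      at hx hy hz
    obtain ⟨hxA, hx1, hx2⟩ := hx
    obtain ⟨hyA, hy1, hy2⟩ := hy
    obtain ⟨hzA, hz1, hz2⟩ := hz
    have hsum' : t * ((x : ZMod p)) + t * ((y : ZMod p)) = t * ((z : ZMod p)) := by
      rw [← mul_add, ← Nat.cast_add, hxyz]
    have hval : (t * (z : ZMod p)).val
        = ((t * (x : ZMod p)).val + (t * (y : ZMod p)).val) % p := by
      rw [← hsum', ZMod.val_add]
    have hlt : (t * (z : ZMod p)).val < p := ZMod.val_lt _
    set u := (t * (x : ZMod p)).val
    set v := (t * (y : ZMod p)).val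
    set w := (t * (z : ZMod p)).val
    rcases Nat.lt_or_ge (u + v) p with h | h
    · rw [Nat.mod_eq_of_lt h] at hval; omega
    · have hmod : (u + v) % p = u + v - p := by
        rw [Nat.mod_eq_sub_mod h, Nat.mod_eq_of_lt]; omega
      rw [hmod] at hval; omega
  · have hft : f t = (A.filter (fun a : ℕ => t * (a : ZMod p) ∈ B)).card := rfl
    have hfcard : A.card ≤ 3 * f t := by nlinarith [htcount]
    rw [hft] at hfcard
    have hq : (A.card : ℚ) ≤ 3 * ((A.filter (fun a : ℕ => t * (a : ZMod p) ∈ B)).card : ℚ) := by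
      exact_mod_cast hfcard
    rw [div_le_iff₀ (by norm_num)]
    linarith
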